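/- Let n = 2m be an even integer with m ≥ 2. Then for all real x one has the polynomial identity (x)_m² − (x−1)_m (x+1)_m = (x)_{m−1} (x+1)_{m−2} ( m x + m(m−1) ); that is, Φ_{n/2}(x) = (x)_{n/2−1}(x+1)_{n/2−2}( (n/2) x + n(n−2)/4 ). -/
import Mathlib


/-- Rising factorial (Pochhammer symbol): `asc x k = x (x+1) ⋯ (x+k-1)`. -/
noncomputable def asc (x : ℝ) (k : ℕ) : ℝ := (ascPochhammer ℝ k).eval x

lemma asc_succ (x : ℝ) (k : ℕ) : asc x (k + 1) = asc x k * (x + k) := by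
  simpa [asc] using ascPochhammer_succ_eval k x

lemma asc_succ_left (x : ℝ) (k : ℕ) : asc x (k + 1) = x * asc (x + 1) k := by
  simp [asc, ascPochhammer_succ_left, Polynomial.eval_comp]

theorem Phi_half_identity (m : ℕ) (hm : 2 ≤ m) (x : ℝ) :
    asc x m ^ 2 - asc (x - 1) m * asc (x + 1) m =
      asc x (m - 1) * asc (x + 1) (m - 2) * ((m : ℝ) * x + (m : ℝ) * ((m : ℝ) - 1)) := by
  obtain ⟨k, rfl⟩ : ∃ k, m = k + 2 := ⟨m - 2, by omega⟩
  simp only [show k + 2 - 1 = k + 1 from rfl, show k + 2 - 2 = k from rfl]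
  rw [show k + 2 = (k + 1) + 1 from rfl, asc_succ x, asc_succ (x+1), asc_succ (x+1) k, asc_succ_left (x-1),
    show x - 1 + 1 = x by ring, asc_succ_left x k]
  push_cast
  ring
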